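/- If ξ is a real random variable with ξ ≤ 1, E[ξ] ≤ 0 and E[ξ²] = σ², then for every λ ≥ 0, E[e^{λξ}] ≤ (1/(1+σ²))·e^{−λσ²} + (σ²/(1+σ²))·e^{λ}. -/

import Mathlib

open Real

lemma quad_mono : Monotone (fun t : ℝ => Real.exp t - 1 - t - t^2/2) := by
  have hd : ∀ t : ℝ, HasDerivAt (fun t : ℝ => Real.exp t - 1 - t - t^2/2)
      (Real.exp t - 1 - t) t := by
    intro t
    have := (((Real.hasDerivAt_exp t).sub_const 1).sub (hasDerivAt_id t)).sub
      (((hasDerivAt_pow 2 t).div_const 2))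
    exact this.congr_deriv (by norm_num)
  apply monotone_of_deriv_nonneg (fun t => (hd t).differentiableAt)
  intro t
  rw [(hd t).deriv]
  nlinarith [Real.add_one_le_exp t]

lemma exp_ge_quad {t : ℝ} (h : 0 ≤ t) : 1 + t + t^2/2 ≤ Real.exp t := by
  have := quad_mono h
  simp only [Real.exp_zero] at this; nlinarith

lemma exp_le_quad {t : ℝ} (h : t ≤ 0) : Real.exp t ≤ 1 + t + t^2/2 := by
  have := quad_mono h
  simp only [Real.exp_zero] at this; nlinarith

lemma k_mono : Monotone (fun t : ℝ => (t-2)*Real.exp t + t + 2) := by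
  have hd : ∀ t : ℝ, HasDerivAt (fun t : ℝ => (t-2)*Real.exp t + t + 2)
      ((t-1)*Real.exp t + 1) t := by
    intro t
    have := ((((hasDerivAt_id t).sub_const 2).mul (Real.hasDerivAt_exp t)).add
      (hasDerivAt_id t)).add_const 2
    simpa using this.congr_deriv (by simp only [id_eq]; ring)
  apply monotone_of_deriv_nonneg (fun t => (hd t).differentiableAt)
  intro t
  rw [(hd t).deriv]
  have h1 : (1 - t) * Real.exp t ≤ 1 := by
    have h2 : 1 - t ≤ Real.exp (-t) := by have := Real.add_one_le_exp (-t); linarith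
    calc (1-t) * Real.exp t ≤ Real.exp (-t) * Real.exp t :=
          mul_le_mul_of_nonneg_right h2 (Real.exp_pos t).le
      _ = 1 := by rw [← Real.exp_add]; simp
  nlinarith

lemma k_sign_pos {t : ℝ} (h : 0 ≤ t) : 0 ≤ (t-2)*Real.exp t + t + 2 := by
  have := k_mono h
  simp only [Real.exp_zero] at this; linarith

lemma k_sign_neg {t : ℝ} (h : t ≤ 0) : (t-2)*Real.exp t + t + 2 ≤ 0 := by
  have := k_mono h
  simp only [Real.exp_zero] at this; linarith

lemma psi_hasDeriv {t : ℝ} (ht : t ≠ 0) :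
    HasDerivAt (fun t : ℝ => (Real.exp t - 1 - t)/t^2)
      ((t * ((t-2)*Real.exp t + t + 2)) / (t^2)^2) t := by
  have hc : HasDerivAt (fun t : ℝ => Real.exp t - 1 - t) (Real.exp t - 1) t := by
    have := ((Real.hasDerivAt_exp t).sub_const 1).sub (hasDerivAt_id t)
    exact this
  have hd2 : HasDerivAt (fun t : ℝ => t^2) (2*t) t := by
    simpa using hasDerivAt_pow 2 t
  have := hc.div hd2 (pow_ne_zero 2 ht)
  exact this.congr_deriv (by ring)

lemma psi_monoOn_pos : MonotoneOn (fun t : ℝ => (Real.exp t - 1 - t)/t^2) (Set.Ioi 0) := by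
  apply monotoneOn_of_deriv_nonneg (convex_Ioi 0)
  · exact fun x hx => ((psi_hasDeriv (ne_of_gt hx)).continuousAt).continuousWithinAt
  · intro x hx
    rw [interior_Ioi] at hx
    exact (psi_hasDeriv (ne_of_gt hx)).differentiableAt.differentiableWithinAt
  · intro x hx
    rw [interior_Ioi] at hx
    rw [(psi_hasDeriv (ne_of_gt hx)).deriv]
    exact div_nonneg (mul_nonneg hx.le (k_sign_pos hx.le)) (by positivity)

lemma psi_monoOn_neg : MonotoneOn (fun t : ℝ => (Real.exp t - 1 - t)/t^2) (Set.Iio 0) := by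
  apply monotoneOn_of_deriv_nonneg (convex_Iio 0)
  · exact fun x hx => ((psi_hasDeriv (ne_of_lt hx)).continuousAt).continuousWithinAt
  · intro x hx
    rw [interior_Iio] at hx
    exact (psi_hasDeriv (ne_of_lt hx)).differentiableAt.differentiableWithinAt
  · intro x hx
    rw [interior_Iio] at hx
    rw [(psi_hasDeriv (ne_of_lt hx)).deriv]
    have hk := k_sign_neg hx.le
    apply div_nonneg _ (by positivity)
    nlinarith [mul_nonneg (neg_nonneg.mpr hx.le) (neg_nonneg.mpr hk)]

lemma key_ineq {u v : ℝ} (h : u ≤ v) :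
    v^2 * (Real.exp u - 1 - u) ≤ u^2 * (Real.exp v - 1 - v) := by
  rcases eq_or_lt_of_le h with rfl | hlt
  · exact le_refl _
  rcases lt_trichotomy u 0 with hu | rfl | hu
  · rcases lt_trichotomy v 0 with hv | rfl | hv
    · have := psi_monoOn_neg hu hv h
      have hu2 : (0:ℝ) < u^2 := pow_two_pos_of_ne_zero hu.ne
      have hv2 : (0:ℝ) < v^2 := pow_two_pos_of_ne_zero hv.ne
      rw [div_le_div_iff₀ hu2 hv2] at this
      linarith
    · simp
    · have h1 : Real.exp u - 1 - u ≤ u^2/2 := by have := exp_le_quad hu.le; linarith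
      have h2 : v^2/2 ≤ Real.exp v - 1 - v := by have := exp_ge_quad hv.le; linarith
      nlinarith [sq_nonneg u, sq_nonneg v]
  · simp
  · have hv : 0 < v := lt_trans hu hlt
    have := psi_monoOn_pos hu hv h
    have hu2 : (0:ℝ) < u^2 := pow_two_pos_of_ne_zero hu.ne'
    have hv2 : (0:ℝ) < v^2 := pow_two_pos_of_ne_zero hv.ne'
    rw [div_le_div_iff₀ hu2 hv2] at this
    linarith
open MeasureTheory Real

theorem bennett_mgf_bound {Ω : Type*} [MeasurableSpace Ω] (μ : Measure Ω)
    [IsProbabilityMeasure μ] (ξ : Ω → ℝ) (σ : ℝ)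
    (hmeas : Measurable ξ)
    (hbound : ∀ᵐ ω ∂μ, ξ ω ≤ 1)
    (hint : Integrable ξ μ) (hint2 : Integrable (fun ω => (ξ ω)^2) μ)
    (hmean : ∫ ω, ξ ω ∂μ ≤ 0)
    (hvar : ∫ ω, (ξ ω)^2 ∂μ = σ^2)
    (lam : ℝ) (hlam : 0 ≤ lam) :
    ∫ ω, Real.exp (lam * ξ ω) ∂μ ≤
      (1/(1+σ^2)) * Real.exp (-(lam * σ^2)) + (σ^2/(1+σ^2)) * Real.exp lam := by
  have hσ : (0:ℝ) ≤ σ^2 := sq_nonneg σ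
  have hσ1 : (0:ℝ) < 1 + σ^2 := by linarith
  rcases eq_or_lt_of_le hlam with rfl | hl
  · simp only [zero_mul, Real.exp_zero, neg_zero, mul_one, integral_const,
      measure_univ, ENNReal.toReal_one, smul_eq_mul, one_mul, probReal_univ]
    rw [← add_div, div_self hσ1.ne']
  set a : ℝ := -σ^2 with ha
  set v : ℝ := lam * (1 + σ^2) with hvdef
  have hv : 0 < v := mul_pos hl hσ1
  set E : ℝ := Real.exp (lam * a) with hE
  have hEpos : 0 < E := Real.exp_pos _
  set D : ℝ := E * (Real.exp v - 1 - v) * lam^2 / v^2 with hD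
  have hexpv : 0 ≤ Real.exp v - 1 - v := by have := Real.add_one_le_exp v; linarith
  have hDpos : 0 ≤ D := by
    apply div_nonneg _ (by positivity)
    have := hEpos.le; positivity
  set c0 : ℝ := E - E*lam*a + D*a^2 with hc0
  set c1 : ℝ := E*lam - 2*D*a with hc1
  -- pointwise bound
  have hpt : ∀ x : ℝ, x ≤ 1 → Real.exp (lam * x) ≤ c0 + c1 * x + D * x^2 := by
    intro x hx
    set u : ℝ := lam * (x - a) with hu
    have huv : u ≤ v := by
      rw [hu, hvdef, ha]
      have : x - -σ^2 ≤ 1 + σ^2 := by linarith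
      exact mul_le_mul_of_nonneg_left this hlam
    have hkey := key_ineq huv
    have hv2 : (0:ℝ) < v^2 := by positivity
    have h1 : Real.exp u - 1 - u ≤ u^2 * (Real.exp v - 1 - v) / v^2 := by
      rw [le_div_iff₀ hv2]; linarith
    have hexpx : Real.exp (lam * x) = E * Real.exp u := by
      rw [hE, ← Real.exp_add]; congr 1; rw [hu]; ring
    have h2 : Real.exp (lam * x) ≤ E * (1 + u + u^2 * (Real.exp v - 1 - v) / v^2) := by
      rw [hexpx]
      exact mul_le_mul_of_nonneg_left (by linarith) hEpos.le
    calc Real.exp (lam * x) ≤ E * (1 + u + u^2 * (Real.exp v - 1 - v) / v^2) := h2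
      _ = c0 + c1 * x + D * x^2 := by
          rw [hc0, hc1, hD, hu]
          field_simp
          ring
  -- integrability
  have hG : Integrable (fun ω => c0 + c1 * ξ ω + D * (ξ ω)^2) μ :=
    ((integrable_const c0).add (hint.const_mul c1)).add (hint2.const_mul D)
  have hL : Integrable (fun ω => Real.exp (lam * ξ ω)) μ := by
    apply Integrable.mono' (integrable_const (Real.exp lam))
      ((measurable_const.mul hmeas).exp.aestronglyMeasurable)
    filter_upwards [hbound] with ω hω
    rw [Real.norm_eq_abs, abs_of_pos (Real.exp_pos _)]
    exact Real.exp_le_exp.mpr (by show lam * ξ ω ≤ lam; nlinarith)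
  have hmono : ∫ ω, Real.exp (lam * ξ ω) ∂μ ≤ ∫ ω, (c0 + c1 * ξ ω + D * (ξ ω)^2) ∂μ := by
    apply integral_mono_ae hL hG
    filter_upwards [hbound] with ω hω
    exact hpt _ hω
  have hGval : ∫ ω, (c0 + c1 * ξ ω + D * (ξ ω)^2) ∂μ
      = c0 + c1 * (∫ ω, ξ ω ∂μ) + D * σ^2 := by
    have i1 : Integrable (fun ω => c0 + c1 * ξ ω) μ :=
      (integrable_const c0).add (hint.const_mul c1)
    rw [integral_add i1 (hint2.const_mul D),
      integral_add (integrable_const c0) (hint.const_mul c1),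
      integral_const, integral_const_mul, integral_const_mul, hvar]
    simp
  have hc1nn : 0 ≤ c1 := by
    rw [hc1, ha]
    have : 0 ≤ E * lam := mul_nonneg hEpos.le hlam
    nlinarith
  have hfin : c0 + D * σ^2 ≤
      (1/(1+σ^2)) * Real.exp (-(lam * σ^2)) + (σ^2/(1+σ^2)) * Real.exp lam := by
    have hEv : E * Real.exp v = Real.exp lam := by
      rw [hE, ← Real.exp_add]; congr 1; rw [hvdef, ha]; ring
    have hEeq : Real.exp (-(lam * σ^2)) = E := by rw [hE, ha]; ring_nf
    rw [hvdef] at hEv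
    rw [hEeq, hc0, hD, ha, hvdef]
    apply le_of_eq
    field_simp
    linear_combination (σ^2*(1+σ^2)) * hEv
  calc ∫ ω, Real.exp (lam * ξ ω) ∂μ
      ≤ c0 + c1 * (∫ ω, ξ ω ∂μ) + D * σ^2 := by rw [← hGval]; exact hmono
    _ ≤ c0 + D * σ^2 := by nlinarith [mul_nonneg hc1nn (neg_nonneg.mpr hmean)]
    _ ≤ _ := hfin
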